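/- Let K1, F1, Z1, S1 be positive integers with Z1 < F1 such that g = K1(F1−Z1)/S1 is an integer with g ≥ 2, and suppose there exists a g-regular (K1,F1,Z1,S1) placement delivery array in which every row contains the same number of stars (Condition 2). Then for every integer m ≥ 2 there exists an m(g−1)-regular (m·K1, (g−1)·F1^m, (g−1)·Z1·F1^{m−1}, g·S1·F1^{m−1}) placement delivery array. -/

import Mathlib

/-- A `(K,F,Z,S)` placement delivery array: an `F × K` array whose entries are either `*`
(encoded as `none`) or integers in `[1:S]` (encoded as `some s` with `s : Fin S`). -/
def IsPDA (K F Z S : ℕ) (P : Fin F → Fin K → Option (Fin S)) : Prop :=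
  (∀ k : Fin K, (Finset.univ.filter fun j : Fin F => P j k = none).card = Z) ∧
  (∀ s : Fin S, ∃ (j : Fin F) (k : Fin K), P j k = some s) ∧
  (∀ (j1 j2 : Fin F) (k1 k2 : Fin K) (s : Fin S),
      P j1 k1 = some s → P j2 k2 = some s → (j1, k1) ≠ (j2, k2) →
      P j1 k2 = none ∧ P j2 k1 = none)

/-- A PDA is `g`-regular if each integer appears exactly `g` times. -/
def PDARegular (K F S g : ℕ) (P : Fin F → Fin K → Option (Fin S)) : Prop :=
  ∀ s : Fin S,
    (Finset.univ.filter fun jk : Fin F × Fin K => P jk.1 jk.2 = some s).card = g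

/-- Row `i` is a star row for the integer `s`. -/
def PDAStarRow (K F S : ℕ) (P : Fin F → Fin K → Option (Fin S)) (i : Fin F) (s : Fin S) : Prop :=
  ∀ (j : Fin F) (k : Fin K), P j k = some s → P i k = none

/-- Condition 1 with parameter `lam`. -/
def PDACondition1 (K F Z S lam : ℕ) (P : Fin F → Fin K → Option (Fin S)) : Prop :=
  lam ∣ F ∧ lam ∣ Z ∧
  (∀ (j : Fin F) (k : Fin K),
      P j k = none ↔
        P ⟨j.val % (F / lam), Nat.lt_of_le_of_lt (Nat.mod_le _ _) j.isLt⟩ k = none) ∧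
  ∃ φ : Fin S → Fin (F / lam),
    (∀ s : Fin S, PDAStarRow K F S P (Fin.castLE (Nat.div_le_self F lam) (φ s)) s) ∧
    (∀ j : Fin (F / lam), (Finset.univ.filter fun s : Fin S => φ s = j).card * F = lam * S)

/-- Condition 2: every row contains the same number of stars. -/
def PDACondition2 (K F S : ℕ) (P : Fin F → Fin K → Option (Fin S)) : Prop :=
  ∀ j1 j2 : Fin F,
    (Finset.univ.filter fun k : Fin K => P j1 k = none).card =
    (Finset.univ.filter fun k : Fin K => P j2 k = none).card

namespace ThmAuxPDA
open Finset

/-- Combinatorial data extracted from the base PDA: for each symbol `s`, a bijection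
between `Fin (g2+2)` and the occurrences of `s`, and for each row `j`, a bijection
between `Fin n` and the non-star columns of row `j`. -/
structure Gadget (K1 F1 S1 n g2 : ℕ) (P : Fin F1 → Fin K1 → Option (Fin S1)) where
  aidx : Fin S1 → Fin F1 → Fin K1 → Fin (g2+2)
  acell : Fin S1 → Fin (g2+2) → Fin F1 × Fin K1
  idx : Fin F1 → Fin K1 → Fin n
  col : Fin F1 → Fin n → Fin K1
  symAt : Fin F1 → Fin K1 → Fin S1
  A1 : ∀ s β, P (acell s β).1 (acell s β).2 = some s
  A2 : ∀ s j k, P j k = some s → acell s (aidx s j k) = (j, k)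
  A3 : ∀ s β, aidx s (acell s β).1 (acell s β).2 = β
  E1 : ∀ j k, P j k ≠ none → col j (idx j k) = k
  E2 : ∀ j c, P j (col j c) ≠ none
  E3 : ∀ j c, idx j (col j c) = c
  symAt_spec : ∀ j k, P j k ≠ none → P j k = some (symAt j k)

variable {K1 F1 S1 n g2 m1 : ℕ} (P : Fin F1 → Fin K1 → Option (Fin S1))
  (G : Gadget K1 F1 S1 n g2 P)

/-- the label (new symbol) assigned to a non-star position -/
def lab (f : Fin (m1+1) → Fin F1) (i : Fin (m1+1)) (k : Fin K1) (e : Fin (g2+1)) :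
    (Fin (m1+1) → Fin F1) × Fin n :=
  (Function.update f i
      (G.acell (G.symAt (f i) k) ((G.aidx (G.symAt (f i) k) (f i) k).succAbove e)).1,
   G.idx (G.acell (G.symAt (f i) k) ((G.aidx (G.symAt (f i) k) (f i) k).succAbove e)).1
     (G.acell (G.symAt (f i) k) ((G.aidx (G.symAt (f i) k) (f i) k).succAbove e)).2)

/-- the constructed array -/
def Q0 (ef : Fin (g2+1) × (Fin (m1+1) → Fin F1)) (ik : Fin (m1+1) × Fin K1) :
    Option ((Fin (m1+1) → Fin F1) × Fin n) :=
  if P (ef.2 ik.1) ik.2 = none then none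
  else some (lab P G ef.2 ik.1 ik.2 ef.1)

/-- the canonical column of a label in group `i` -/
def kc (r : Fin (m1+1) → Fin F1) (c : Fin n) (i : Fin (m1+1)) : Fin K1 := G.col (r i) c

/-- the canonical base symbol of a label in group `i` -/
def sc (r : Fin (m1+1) → Fin F1) (c : Fin n) (i : Fin (m1+1)) : Fin S1 :=
  G.symAt (r i) (kc P G r c i)

/-- the canonical excluded occurrence index of a label in group `i` -/
def ac (r : Fin (m1+1) → Fin F1) (c : Fin n) (i : Fin (m1+1)) : Fin (g2+2) :=
  G.aidx (sc P G r c i) (r i) (kc P G r c i)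

lemma kc_spec (r : Fin (m1+1) → Fin F1) (c : Fin n) (i : Fin (m1+1)) :
    P (r i) (kc P G r c i) = some (sc P G r c i) :=
  G.symAt_spec _ _ (G.E2 _ _)

lemma ac_spec (r : Fin (m1+1) → Fin F1) (c : Fin n) (i : Fin (m1+1)) :
    G.acell (sc P G r c i) (ac P G r c i) = (r i, kc P G r c i) :=
  G.A2 _ _ _ (kc_spec P G r c i)

lemma lab_eq_iff (f : Fin (m1+1) → Fin F1) (i : Fin (m1+1)) (k : Fin K1) (e : Fin (g2+1))
    (r : Fin (m1+1) → Fin F1) (c : Fin n) (h : P (f i) k ≠ none) :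
    lab P G f i k e = (r, c) ↔
      ((∀ i', i' ≠ i → f i' = r i') ∧
       P (f i) k = some (sc P G r c i) ∧
       (G.aidx (sc P G r c i) (f i) k).succAbove e = ac P G r c i) := by
  have hs : P (f i) k = some (G.symAt (f i) k) := G.symAt_spec _ _ h
  set s := G.symAt (f i) k with hsdef
  set a := (G.aidx s (f i) k).succAbove e with hadef
  set oa := G.acell s a with hoadef
  have hoa : P oa.1 oa.2 = some s := G.A1 s a
  have hne2 : P oa.1 oa.2 ≠ none := by rw [hoa]; exact Option.some_ne_none _
  constructor
  · intro hl
    unfold lab at hl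
    rw [← hsdef, ← hadef, ← hoadef] at hl
    have hup : Function.update f i oa.1 = r := congrArg Prod.fst hl
    have hidx : G.idx oa.1 oa.2 = c := congrArg Prod.snd hl
    have hri : r i = oa.1 := by rw [← hup]; simp
    have hoff : ∀ i', i' ≠ i → f i' = r i' := by
      intro i' hne; rw [← hup, Function.update_of_ne hne]
    have hkc : kc P G r c i = oa.2 := by
      unfold kc; rw [hri, ← hidx]; exact G.E1 _ _ hne2
    have hsc : sc P G r c i = s := by
      unfold sc; rw [hkc, hri]
      have h2 := G.symAt_spec oa.1 oa.2 hne2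
      rw [hoa] at h2
      exact (Option.some_injective _ h2).symm
    refine ⟨hoff, by rw [hsc]; exact hs, ?_⟩
    unfold ac
    rw [hsc, hkc, hri]
    rw [hoadef, G.A3 s a]
  · rintro ⟨hoff, hsome, hsa⟩
    have hseq : s = sc P G r c i := Option.some_injective _ (hs.symm.trans hsome)
    have ha : a = ac P G r c i := by rw [hadef, hseq]; exact hsa
    have hoaeq : oa = (r i, kc P G r c i) := by
      rw [hoadef, hseq, ha]; exact ac_spec P G r c i
    unfold lab
    rw [← hsdef, ← hadef, ← hoadef]
    refine Prod.ext ?_ ?_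
    · show Function.update f i oa.1 = r
      funext i'
      by_cases hi : i' = i
      · subst hi; rw [Function.update_self]
        rw [hoaeq]
      · rw [Function.update_of_ne hi]; exact hoff i' hi
    · show G.idx oa.1 oa.2 = c
      rw [hoaeq]
      exact G.E3 _ _

lemma Q0_eq_none_iff (ef : Fin (g2+1) × (Fin (m1+1) → Fin F1)) (ik : Fin (m1+1) × Fin K1) :
    Q0 P G ef ik = none ↔ P (ef.2 ik.1) ik.2 = none := by
  unfold Q0; split <;> simp_all

lemma Q0_eq_some_iff (e : Fin (g2+1)) (f : Fin (m1+1) → Fin F1) (i : Fin (m1+1)) (k : Fin K1)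
    (r : Fin (m1+1) → Fin F1) (c : Fin n) :
    Q0 P G (e, f) (i, k) = some (r, c) ↔
      ((∀ i', i' ≠ i → f i' = r i') ∧
       P (f i) k = some (sc P G r c i) ∧
       (G.aidx (sc P G r c i) (f i) k).succAbove e = ac P G r c i) := by
  unfold Q0
  by_cases h : P (f i) k = none
  · rw [if_pos h]; simp [h]
  · rw [if_neg h, Option.some_inj]
    exact lab_eq_iff P G f i k e r c h

lemma card_ne_fin (N : ℕ) (i : Fin (N+1)) : Fintype.card {j : Fin (N+1) // j ≠ i} = N := by
  have h := Fintype.card_subtype_compl (fun j : Fin (N+1) => j = i)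
  rw [Fintype.card_subtype_eq, Fintype.card_fin] at h
  simpa using h

lemma count_none (Z1 : ℕ)
    (h1 : ∀ k, (Finset.univ.filter fun j => P j k = none).card = Z1)
    (ik : Fin (m1+1) × Fin K1) :
    Fintype.card {ef : Fin (g2+1) × (Fin (m1+1) → Fin F1) // Q0 P G ef ik = none}
      = (g2+1) * (Z1 * F1 ^ m1) := by
  obtain ⟨i, k⟩ := ik
  have e1 : {ef : Fin (g2+1) × (Fin (m1+1) → Fin F1) // Q0 P G ef (i,k) = none}
      ≃ Fin (g2+1) × {f : Fin (m1+1) → Fin F1 // P (f i) k = none} :=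
    { toFun := fun x => (x.1.1, ⟨x.1.2, (Q0_eq_none_iff P G x.1 (i,k)).mp x.2⟩)
      invFun := fun y => ⟨(y.1, y.2.1), (Q0_eq_none_iff P G (y.1, y.2.1) (i,k)).mpr y.2.2⟩
      left_inv := fun x => Subtype.ext rfl
      right_inv := fun y => rfl }
  have e2 : {f : Fin (m1+1) → Fin F1 // P (f i) k = none}
      ≃ {x : Fin F1 // P x k = none} × ({i' : Fin (m1+1) // i' ≠ i} → Fin F1) :=
    { toFun := fun f => (⟨f.1 i, f.2⟩, fun i' => f.1 i'.1)
      invFun := fun y => ⟨fun i' => if h : i' = i then y.1.1 else y.2 ⟨i', h⟩,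
        by simpa using y.1.2⟩
      left_inv := fun f => Subtype.ext (funext fun i' => by
        by_cases h : i' = i
        · subst h; simp
        · simp [h])
      right_inv := fun y => by
        refine Prod.ext (Subtype.ext (by simp)) ?_
        funext i'
        simp [i'.2] }
  rw [Fintype.card_congr (e1.trans (Equiv.prodCongr (Equiv.refl _) e2))]
  rw [Fintype.card_prod, Fintype.card_prod, Fintype.card_fin, Fintype.card_fun,
    Fintype.card_subtype, h1 k, card_ne_fin, Fintype.card_fin]

lemma count_some (rc : (Fin (m1+1) → Fin F1) × Fin n) :
    Fintype.card {x : (Fin (g2+1) × (Fin (m1+1) → Fin F1)) × (Fin (m1+1) × Fin K1) //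
        Q0 P G x.1 x.2 = some rc} = (m1+1) * (g2+1) := by
  obtain ⟨r, c⟩ := rc
  have H : (Σ i : Fin (m1+1), {β : Fin (g2+2) // β ≠ ac P G r c i}) ≃
      {x : (Fin (g2+1) × (Fin (m1+1) → Fin F1)) × (Fin (m1+1) × Fin K1) //
        Q0 P G x.1 x.2 = some (r, c)} := by
    refine
      { toFun := fun w =>
          ⟨(((Fin.exists_succAbove_eq (Ne.symm w.2.2)).choose,
             Function.update r w.1 (G.acell (sc P G r c w.1) w.2.1).1),
            (w.1, (G.acell (sc P G r c w.1) w.2.1).2)), ?_⟩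
        invFun := fun x =>
          ⟨x.1.2.1, ⟨G.aidx (sc P G r c x.1.2.1) (x.1.1.2 x.1.2.1) x.1.2.2, ?_⟩⟩
        left_inv := ?_
        right_inv := ?_ }
    · obtain ⟨i, β, hβ⟩ := w
      rw [Q0_eq_some_iff]
      refine ⟨fun i' hi' => Function.update_of_ne hi' _ _, ?_, ?_⟩
      · rw [Function.update_self]; exact G.A1 _ _
      · rw [Function.update_self, G.A3]
        exact (Fin.exists_succAbove_eq (Ne.symm hβ)).choose_spec
    · obtain ⟨⟨⟨e, f⟩, ⟨i, k⟩⟩, hx⟩ := x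
      rw [Q0_eq_some_iff] at hx
      intro hEq
      have := hx.2.2
      rw [hEq] at this
      exact Fin.succAbove_ne _ _ this
    · rintro ⟨i, β, hβ⟩
      refine Sigma.ext rfl (heq_of_eq (Subtype.ext ?_))
      dsimp only
      rw [Function.update_self]
      exact G.A3 _ _
    · rintro ⟨⟨⟨e, f⟩, ⟨i, k⟩⟩, hx⟩
      obtain ⟨hoff, hsome, hsa⟩ := (Q0_eq_some_iff P G e f i k r c).mp hx
      have hcell : G.acell (sc P G r c i) (G.aidx (sc P G r c i) (f i) k) = (f i, k) :=
        G.A2 _ _ _ hsome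
      refine Subtype.ext ?_
      show ((_, Function.update r i (G.acell (sc P G r c i) (G.aidx (sc P G r c i) (f i) k)).1),
        (i, (G.acell (sc P G r c i) (G.aidx (sc P G r c i) (f i) k)).2)) = ((e, f), (i, k))
      rw [hcell]
      have hne : G.aidx (sc P G r c i) (f i) k ≠ ac P G r c i := by
        intro hEq
        rw [hEq] at hsa
        exact Fin.succAbove_ne _ _ hsa
      have he : (Fin.exists_succAbove_eq (Ne.symm hne)).choose = e := by
        apply Fin.succAbove_right_injective
          (p := G.aidx (sc P G r c i) (f i) k)
        rw [(Fin.exists_succAbove_eq (Ne.symm hne)).choose_spec, hsa]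
      refine Prod.ext (Prod.ext ?_ ?_) rfl
      · exact he
      · show Function.update r i (f i, k).1 = f
        funext i'
        by_cases hi : i' = i
        · subst hi; rw [Function.update_self]
        · rw [Function.update_of_ne hi]; exact (hoff i' hi).symm
  rw [← Fintype.card_congr H, Fintype.card_sigma]
  have hc : ∀ i : Fin (m1+1), Fintype.card {β : Fin (g2+2) // β ≠ ac P G r c i} = g2+1 :=
    fun i => card_ne_fin _ _
  simp [hc]

lemma exch
    (h3 : ∀ (j1 j2 : Fin F1) (k1 k2 : Fin K1) (s : Fin S1),
      P j1 k1 = some s → P j2 k2 = some s → (j1, k1) ≠ (j2, k2) →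
      P j1 k2 = none ∧ P j2 k1 = none)
    (x1 x2 : Fin (g2+1) × (Fin (m1+1) → Fin F1)) (y1 y2 : Fin (m1+1) × Fin K1)
    (t : (Fin (m1+1) → Fin F1) × Fin n)
    (ha : Q0 P G x1 y1 = some t) (hb : Q0 P G x2 y2 = some t)
    (hne : (x1, y1) ≠ (x2, y2)) :
    Q0 P G x1 y2 = none ∧ Q0 P G x2 y1 = none := by
  obtain ⟨e1, f1⟩ := x1
  obtain ⟨e2, f2⟩ := x2
  obtain ⟨i1, k1⟩ := y1
  obtain ⟨i2, k2⟩ := y2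
  obtain ⟨r, c⟩ := t
  obtain ⟨hoff1, hsome1, hsa1⟩ := (Q0_eq_some_iff P G e1 f1 i1 k1 r c).mp ha
  obtain ⟨hoff2, hsome2, hsa2⟩ := (Q0_eq_some_iff P G e2 f2 i2 k2 r c).mp hb
  rw [Q0_eq_none_iff, Q0_eq_none_iff]
  dsimp only
  by_cases hii : i1 = i2
  · subst hii
    by_cases hcell : ((f1 i1 : Fin F1), k1) = (f2 i1, k2)
    · exfalso
      apply hne
      have hf1k : f1 i1 = f2 i1 := congrArg Prod.fst hcell
      have hkk : k1 = k2 := congrArg Prod.snd hcell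
      have hff : f1 = f2 := by
        funext i'
        by_cases h : i' = i1
        · subst h; exact hf1k
        · rw [hoff1 i' h, ← hoff2 i' h]
      have hβ : G.aidx (sc P G r c i1) (f1 i1) k1 = G.aidx (sc P G r c i1) (f2 i1) k2 := by
        rw [hf1k, hkk]
      have hee : e1 = e2 := by
        apply Fin.succAbove_right_injective (p := G.aidx (sc P G r c i1) (f1 i1) k1)
        rw [hsa1]
        rw [hβ, hsa2]
      rw [hee, hff, hkk]
    · exact h3 _ _ _ _ _ hsome1 hsome2 hcell
  · have h21 : i2 ≠ i1 := fun h => hii h.symm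
    constructor
    · rw [hoff1 i2 h21]
      have hnecell : ((r i2 : Fin F1), kc P G r c i2) ≠ (f2 i2, k2) := by
        intro hEq
        have hfe : f2 i2 = r i2 := (congrArg Prod.fst hEq).symm
        have hke : k2 = kc P G r c i2 := (congrArg Prod.snd hEq).symm
        have : G.aidx (sc P G r c i2) (f2 i2) k2 = ac P G r c i2 := by
          rw [hfe, hke]; rfl
        rw [this] at hsa2
        exact Fin.succAbove_ne _ _ hsa2
      exact (h3 _ _ _ _ _ (kc_spec P G r c i2) hsome2 hnecell).1
    · rw [hoff2 i1 hii]
      have hnecell : ((r i1 : Fin F1), kc P G r c i1) ≠ (f1 i1, k1) := by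
        intro hEq
        have hfe : f1 i1 = r i1 := (congrArg Prod.fst hEq).symm
        have hke : k1 = kc P G r c i1 := (congrArg Prod.snd hEq).symm
        have : G.aidx (sc P G r c i1) (f1 i1) k1 = ac P G r c i1 := by
          rw [hfe, hke]; rfl
        rw [this] at hsa1
        exact Fin.succAbove_ne _ _ hsa1
      exact (h3 _ _ _ _ _ (kc_spec P G r c i1) hsome1 hnecell).1

end ThmAuxPDA


namespace ThmAuxPDA

theorem aux {K1 F1 S1 n g2 m1 : ℕ} (Z1 F K S : ℕ)
    (P : Fin F1 → Fin K1 → Option (Fin S1)) (G : Gadget K1 F1 S1 n g2 P)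
    (h1 : ∀ k, (Finset.univ.filter fun j => P j k = none).card = Z1)
    (h3 : ∀ (j1 j2 : Fin F1) (k1 k2 : Fin K1) (s : Fin S1),
      P j1 k1 = some s → P j2 k2 = some s → (j1, k1) ≠ (j2, k2) →
      P j1 k2 = none ∧ P j2 k1 = none)
    (hF : F = (g2+1) * F1 ^ (m1+1))
    (hK : K = (m1+1) * K1)
    (hS : S = F1 ^ (m1+1) * n) :
    ∃ Q : Fin F → Fin K → Option (Fin S),
      IsPDA K F ((g2+1) * Z1 * F1 ^ m1) S Q ∧
      PDARegular K F S ((m1+1) * (g2+1)) Q := by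
  have cR : Fintype.card (Fin (g2+1) × (Fin (m1+1) → Fin F1)) = F := by
    rw [hF]; simp [Fintype.card_fun]
  have cC : Fintype.card (Fin (m1+1) × Fin K1) = K := by rw [hK]; simp
  have cS : Fintype.card ((Fin (m1+1) → Fin F1) × Fin n) = S := by
    rw [hS]; simp [Fintype.card_fun]
  let eR := (Fintype.equivFinOfCardEq cR).symm
  let eC := (Fintype.equivFinOfCardEq cC).symm
  let eS := Fintype.equivFinOfCardEq cS
  have hmap : ∀ (o : Option ((Fin (m1+1) → Fin F1) × Fin n)) (s : Fin S),
      o.map eS = some s ↔ o = some (eS.symm s) := by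
    intro o s
    rw [Option.map_eq_some_iff]
    constructor
    · rintro ⟨a, h1', rfl⟩; rw [h1']; simp
    · intro h; exact ⟨_, h, by simp⟩
  refine ⟨fun j k => (Q0 P G (eR j) (eC k)).map eS, ⟨?_, ?_, ?_⟩, ?_⟩
  · -- C1 : star count per column
    intro k'
    simp only [Option.map_eq_none_iff]
    rw [← Fintype.card_subtype]
    have hcong : Fintype.card {j : Fin F // Q0 P G (eR j) (eC k') = none}
        = Fintype.card {x : Fin (g2+1) × (Fin (m1+1) → Fin F1) // Q0 P G x (eC k') = none} :=
      Fintype.card_congr (Equiv.subtypeEquiv eR fun j => Iff.rfl)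
    rw [hcong, count_none P G Z1 h1 (eC k')]
    ring
  · -- C2 : every symbol occurs
    intro s
    have hpos : 0 < Fintype.card
        {x : (Fin (g2+1) × (Fin (m1+1) → Fin F1)) × (Fin (m1+1) × Fin K1) //
          Q0 P G x.1 x.2 = some (eS.symm s)} := by
      rw [count_some P G (eS.symm s)]
      positivity
    obtain ⟨⟨⟨x, y⟩, hxy⟩⟩ := Fintype.card_pos_iff.mp hpos
    refine ⟨eR.symm x, eC.symm y, ?_⟩
    simp only [Equiv.apply_symm_apply, hxy, Option.map_some]
  · -- C3
    intro j1 j2 k1 k2 s hA hB hne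
    rw [hmap] at hA hB
    have hne' : ((eR j1, eC k1)) ≠ ((eR j2, eC k2)) := by
      intro h
      apply hne
      have h1' : eR j1 = eR j2 := congrArg Prod.fst h
      have h2' : eC k1 = eC k2 := congrArg Prod.snd h
      rw [eR.injective h1', eC.injective h2']
    have := exch P G h3 (eR j1) (eR j2) (eC k1) (eC k2) (eS.symm s) hA hB hne'
    constructor
    · rw [Option.map_eq_none_iff]; exact this.1
    · rw [Option.map_eq_none_iff]; exact this.2
  · -- regularity
    intro s
    simp only [hmap]
    rw [← Fintype.card_subtype]
    have hcong : Fintype.card {jk : Fin F × Fin K // Q0 P G (eR jk.1) (eC jk.2) = some (eS.symm s)}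
        = Fintype.card {x : (Fin (g2+1) × (Fin (m1+1) → Fin F1)) × (Fin (m1+1) × Fin K1) //
            Q0 P G x.1 x.2 = some (eS.symm s)} :=
      Fintype.card_congr (Equiv.subtypeEquiv (eR.prodCongr eC) fun p => Iff.rfl)
    rw [hcong]
    exact count_some P G (eS.symm s)

end ThmAuxPDA

/-- Theorem 2: if there is a `g`-regular `(K1,F1,Z1,S1)` PDA (with
`g = K1(F1-Z1)/S1 ≥ 2`) in which every row has the same number of stars (Condition 2), then
for any integer `m ≥ 2` there is an `m(g-1)`-regular
`(m·K1, (g-1)·F1^m, (g-1)·Z1·F1^(m-1), g·S1·F1^(m-1))` PDA. -/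
theorem theopkm (K1 F1 Z1 S1 g : ℕ)
    (hK1 : 0 < K1) (hF1 : 0 < F1) (hZ1 : 0 < Z1) (hS1 : 0 < S1)
    (hZF : Z1 < F1) (hg : 2 ≤ g) (hgdef : g * S1 = K1 * (F1 - Z1))
    (hex : ∃ P : Fin F1 → Fin K1 → Option (Fin S1),
        IsPDA K1 F1 Z1 S1 P ∧ PDARegular K1 F1 S1 g P ∧ PDACondition2 K1 F1 S1 P) :
    ∀ m : ℕ, 2 ≤ m →
      ∃ Q : Fin ((g - 1) * F1 ^ m) → Fin (m * K1) →
            Option (Fin (g * S1 * F1 ^ (m - 1))),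
        IsPDA (m * K1) ((g - 1) * F1 ^ m) ((g - 1) * Z1 * F1 ^ (m - 1))
          (g * S1 * F1 ^ (m - 1)) Q ∧
        PDARegular (m * K1) ((g - 1) * F1 ^ m) (g * S1 * F1 ^ (m - 1)) (m * (g - 1)) Q := by
  intro m hm
  obtain ⟨m1, rfl⟩ : ∃ m1, m = m1 + 1 := ⟨m - 1, by omega⟩
  obtain ⟨g2, rfl⟩ : ∃ g2, g = g2 + 2 := ⟨g - 2, by omega⟩
  obtain ⟨P, ⟨h1, h2, h3⟩, hreg, hc2⟩ := hex
  unfold PDARegular at hreg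
  have hN : ∀ j, (Finset.univ.filter fun k => P j k ≠ none).card
      = (Finset.univ.filter fun k => P ⟨0, hF1⟩ k ≠ none).card := by
    intro j
    have a1 := Finset.card_filter_add_card_filter_not
      (s := (Finset.univ : Finset (Fin K1))) (p := fun k => P j k = none)
    have a2 := Finset.card_filter_add_card_filter_not
      (s := (Finset.univ : Finset (Fin K1))) (p := fun k => P ⟨0, hF1⟩ k = none)
    have hc := hc2 j ⟨0, hF1⟩
    simp only [ne_eq, Finset.card_univ, Fintype.card_fin] at a1 a2 ⊢
    omega
  set n := (Finset.univ.filter fun k => P ⟨0, hF1⟩ k ≠ none).card with hn0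
  -- every row has a non-star entry, since symbols exist
  have hn : 0 < n := by
    have hpos : 0 < (Finset.univ.filter
        fun jk : Fin F1 × Fin K1 => P jk.1 jk.2 = some ⟨0, hS1⟩).card := by
      rw [hreg]; omega
    obtain ⟨jk, hjk⟩ := Finset.card_pos.mp hpos
    rw [Finset.mem_filter] at hjk
    rw [← hN jk.1]
    apply Finset.card_pos.mpr
    exact ⟨jk.2, by simp [hjk.2]⟩
  -- double counting : F1 * n = S1 * (g2 + 2)
  have cardO : ∀ s : Fin S1,
      Fintype.card {jk : Fin F1 × Fin K1 // P jk.1 jk.2 = some s} = g2 + 2 := by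
    intro s; rw [Fintype.card_subtype]; exact hreg s
  have cardN : ∀ j : Fin F1, Fintype.card {k : Fin K1 // P j k ≠ none} = n := by
    intro j; rw [Fintype.card_subtype]; exact hN j
  have hFn : F1 * n = S1 * (g2 + 2) := by
    have hsub : (Finset.univ.filter fun jk : Fin F1 × Fin K1 => P jk.1 jk.2 ≠ none).card
        = F1 * n := by
      rw [← Fintype.card_subtype]
      rw [Fintype.card_congr (Equiv.subtypeProdEquivSigmaSubtype
        (fun (j : Fin F1) (k : Fin K1) => P j k ≠ none))]
      rw [Fintype.card_sigma, Finset.sum_congr rfl (fun j _ => cardN j), Finset.sum_const,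
        Finset.card_univ, Fintype.card_fin, smul_eq_mul]
    have hsym : (Finset.univ.filter fun jk : Fin F1 × Fin K1 => P jk.1 jk.2 ≠ none).card
        = S1 * (g2 + 2) := by
      have hexp : (Finset.univ.filter fun jk : Fin F1 × Fin K1 => P jk.1 jk.2 ≠ none)
          = Finset.univ.biUnion (fun s : Fin S1 => Finset.univ.filter
              fun jk : Fin F1 × Fin K1 => P jk.1 jk.2 = some s) := by
        ext jk
        simp only [Finset.mem_filter, Finset.mem_biUnion, Finset.mem_univ, true_and]
        cases h : P jk.1 jk.2 <;> simp
      rw [hexp, Finset.card_biUnion]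
      · rw [Finset.sum_congr rfl (fun s _ => hreg s), Finset.sum_const, Finset.card_univ,
          Fintype.card_fin, smul_eq_mul]
      · intro s1 _ s2 _ hne12
        rw [Function.onFun, Finset.disjoint_left]
        intro a ha1 ha2
        rw [Finset.mem_filter] at ha1 ha2
        exact hne12 (Option.some_injective _ (ha1.2.symm.trans ha2.2))
    rw [← hsub, hsym]
  -- build the gadget
  let A : ∀ s : Fin S1, {jk : Fin F1 × Fin K1 // P jk.1 jk.2 = some s} ≃ Fin (g2+2) :=
    fun s => Fintype.equivFinOfCardEq (cardO s)
  let E : ∀ j : Fin F1, {k : Fin K1 // P j k ≠ none} ≃ Fin n :=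
    fun j => Fintype.equivFinOfCardEq (cardN j)
  let G : ThmAuxPDA.Gadget K1 F1 S1 n g2 P :=
    { aidx := fun s j k => if h : P j k = some s then A s ⟨(j, k), h⟩ else ⟨0, by omega⟩
      acell := fun s β => ((A s).symm β).1
      idx := fun j k => if h : P j k ≠ none then E j ⟨k, h⟩ else ⟨0, hn⟩
      col := fun j c => ((E j).symm c).1
      symAt := fun j k => (P j k).getD ⟨0, hS1⟩
      A1 := fun s β => ((A s).symm β).2
      A2 := fun s j k h => by
        rw [dif_pos h, Equiv.symm_apply_apply]
      A3 := fun s β => by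
        have h : P ((A s).symm β).1.1 ((A s).symm β).1.2 = some s := ((A s).symm β).2
        rw [dif_pos h]
        rw [show (⟨(((A s).symm β).1.1, ((A s).symm β).1.2), h⟩ :
            {jk : Fin F1 × Fin K1 // P jk.1 jk.2 = some s}) = (A s).symm β from
          Subtype.ext rfl, Equiv.apply_symm_apply]
      E1 := fun j k h => by
        rw [dif_pos h, Equiv.symm_apply_apply]
      E2 := fun j c => ((E j).symm c).2
      E3 := fun j c => by
        have h : P j ((E j).symm c).1 ≠ none := ((E j).symm c).2
        rw [dif_pos h]
        rw [show (⟨((E j).symm c).1, h⟩ : {k : Fin K1 // P j k ≠ none}) = (E j).symm c from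
          Subtype.ext rfl, Equiv.apply_symm_apply]
      symAt_spec := fun j k h => by
        cases hp : P j k with
        | none => exact absurd hp h
        | some a => simp [hp] }
  have hS' : (g2+2) * S1 * F1 ^ (m1+1-1) = F1 ^ (m1+1) * n := by
    simp only [Nat.add_sub_cancel]
    calc (g2+2) * S1 * F1 ^ m1 = S1 * (g2+2) * F1 ^ m1 := by ring
      _ = F1 * n * F1 ^ m1 := by rw [hFn]
      _ = F1 ^ (m1+1) * n := by ring
  exact ThmAuxPDA.aux Z1 _ _ _ P G h1 h3 (by rfl) rfl hS'
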